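/- arXiv:2503.07351 — 3 statements merged into one kernel-verified Lean document; each statement's English description precedes it below -/
import Mathlib

section
/- Let (A,R) be a finite argumentation framework. A function ℓ : A → {0, 1/2, 1} is a complete labelling if and only if for every a ∈ A, ℓ(a) equals the minimum over all attackers b of a of 1 - ℓ(b) (where the minimum over the empty set is 1). Equivalently: complete labellings coincide with solutions of the Gödel-encoded equational system. -/
private lemma fold_min_le_one {A : Type*} (s : Finset A) (f : A → ℝ) :
    s.fold min 1 f ≤ 1 := (Finset.fold_min_le (1:ℝ)).2 (Or.inl le_rfl)

private lemma fold_min_eq_one_iff {A : Type*} (s : Finset A) (f : A → ℝ) :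
    s.fold min 1 f = 1 ↔ ∀ b ∈ s, 1 ≤ f b := by
  constructor
  · intro h b hb
    exact ((Finset.le_fold_min (1:ℝ)).1 (le_of_eq h.symm)).2 b hb
  · intro h
    exact le_antisymm (fold_min_le_one s f) ((Finset.le_fold_min (1:ℝ)).2 ⟨le_rfl, h⟩)

private lemma fold_min_eq_zero_iff {A : Type*} (s : Finset A) (f : A → ℝ)
    (hf : ∀ b ∈ s, 0 ≤ f b) :
    s.fold min 1 f = 0 ↔ ∃ b ∈ s, f b ≤ 0 := by
  constructor
  · intro h
    rcases (Finset.fold_min_le (0:ℝ)).1 (le_of_eq h) with h1 | ⟨b, hb, hfb⟩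
    · norm_num at h1
    · exact ⟨b, hb, hfb⟩
  · intro ⟨b, hb, hfb⟩
    refine le_antisymm ((Finset.fold_min_le (0:ℝ)).2 (Or.inr ⟨b, hb, hfb⟩)) ?_
    exact (Finset.le_fold_min (0:ℝ)).2 ⟨by norm_num, hf⟩

private lemma fold_min_range {A : Type*} [DecidableEq A] (s : Finset A) (f : A → ℝ)
    (hf : ∀ b, f b = 0 ∨ f b = 1/2 ∨ f b = 1) :
    s.fold min 1 f = 0 ∨ s.fold min 1 f = 1/2 ∨ s.fold min 1 f = 1 := by
  induction s using Finset.induction with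
  | empty => simp
  | @insert b t hb ih =>
    rw [Finset.fold_insert hb]
    rcases hf b with h | h | h <;> rcases ih with h' | h' | h' <;>
      rw [h, h'] <;> norm_num

/-- Complete labellings coincide with solutions of the Gödel-encoded equational system:
ℓ(a) = min over attackers b of (1 - ℓ(b)), with min over ∅ = 1. -/
theorem complete_iff_godel_encoded {A : Type*} [Fintype A] [DecidableEq A]
    (R : A → A → Prop) [DecidableRel R]
    (ℓ : A → ℝ) (hrange : ∀ a, ℓ a = 0 ∨ ℓ a = 1/2 ∨ ℓ a = 1) :
    ((∀ a, (ℓ a = 1 ↔ ∀ b, R b a → ℓ b = 0) ∧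
           (ℓ a = 0 ↔ ∃ b, R b a ∧ ℓ b = 1))
      ↔
     (∀ a, ℓ a =
        Finset.fold min 1 (fun b => 1 - ℓ b) (Finset.univ.filter (fun b => R b a)))) := by
  have hnn : ∀ a : A, ∀ b ∈ Finset.univ.filter (fun b => R b a), (0:ℝ) ≤ 1 - ℓ b := by
    intro a b _
    rcases hrange b with h | h | h <;> rw [h] <;> norm_num
  have hone : ∀ a : A,
      (Finset.univ.filter (fun b => R b a)).fold min 1 (fun b => 1 - ℓ b) = 1 ↔
        ∀ b, R b a → ℓ b = 0 := by
    intro a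
    rw [fold_min_eq_one_iff]
    constructor
    · intro h b hb
      have := h b (by simp [hb])
      rcases hrange b with h' | h' | h' <;> rw [h'] at this ⊢ <;> norm_num at this
    · intro h b hb
      simp only [Finset.mem_filter] at hb
      rw [h b hb.2]; norm_num
  have hzero : ∀ a : A,
      (Finset.univ.filter (fun b => R b a)).fold min 1 (fun b => 1 - ℓ b) = 0 ↔
        ∃ b, R b a ∧ ℓ b = 1 := by
    intro a
    rw [fold_min_eq_zero_iff _ _ (hnn a)]
    constructor
    · intro ⟨b, hb, hfb⟩
      simp only [Finset.mem_filter] at hb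
      refine ⟨b, hb.2, ?_⟩
      rcases hrange b with h' | h' | h' <;> rw [h'] at hfb ⊢ <;> norm_num at hfb
    · intro ⟨b, hb, h1⟩
      exact ⟨b, by simp [hb], by rw [h1]; norm_num⟩
  constructor
  · intro h a
    have hmr := fold_min_range (Finset.univ.filter (fun b => R b a))
      (fun b => 1 - ℓ b) (fun b => by
        rcases hrange b with h' | h' | h' <;> simp [h'] <;> norm_num)
    rcases hrange a with ha | ha | ha
    · rw [ha, (hzero a).2 ((h a).2.1 ha)]
    · rcases hmr with hm' | hm' | hm'
      · exact absurd ((h a).2.2 ((hzero a).1 hm')) (by rw [ha]; norm_num)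
      · rw [ha, hm']
      · exact absurd ((h a).1.2 ((hone a).1 hm')) (by rw [ha]; norm_num)
    · rw [ha, (hone a).2 ((h a).1.1 ha)]
  · intro h a
    refine ⟨?_, ?_⟩
    · rw [h a]; exact hone a
    · rw [h a]; exact hzero a
end

section
/- Let (A,R) be a finite argumentation framework, N the standard negation, * a t-norm without zero divisors, and ‖·‖ : A → [0,1] a solution of the encoded system ‖a‖ = *-product of N(‖b‖) over attackers b (empty product 1). Define ℓ(a) = 1 if ‖a‖ = 1; ℓ(a) = 0 if some attacker b of a has ‖b‖ = 1; ℓ(a) = 1/2 otherwise. Then ℓ is a complete labelling of (A,R). -/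
/-- The ternarization of a solution of the encoded system (standard negation, t-norm
without zero divisors) is a complete labelling. -/
theorem ternarization_is_complete {A : Type*} [Fintype A] [DecidableEq A]
    (R : A → A → Prop) [DecidableRel R]
    (T : ℝ → ℝ → ℝ)
    (hT_mem : ∀ x ∈ Set.Icc (0:ℝ) 1, ∀ y ∈ Set.Icc (0:ℝ) 1, T x y ∈ Set.Icc (0:ℝ) 1)
    (hT1 : ∀ x ∈ Set.Icc (0:ℝ) 1, T x 1 = x)
    (hTcomm : ∀ x ∈ Set.Icc (0:ℝ) 1, ∀ y ∈ Set.Icc (0:ℝ) 1, T x y = T y x)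
    (hTassoc : ∀ x ∈ Set.Icc (0:ℝ) 1, ∀ y ∈ Set.Icc (0:ℝ) 1, ∀ z ∈ Set.Icc (0:ℝ) 1,
      T x (T y z) = T (T x y) z)
    (hTmono : ∀ x ∈ Set.Icc (0:ℝ) 1, ∀ y ∈ Set.Icc (0:ℝ) 1, ∀ u ∈ Set.Icc (0:ℝ) 1,
      ∀ v ∈ Set.Icc (0:ℝ) 1, x ≤ u → y ≤ v → T x y ≤ T u v)
    (hTnzd : ∀ a b : ℝ, 0 < a → a ≤ 1 → 0 < b → b ≤ 1 → 0 < T a b)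
    (f : A → ℝ) (hf : ∀ a, f a ∈ Set.Icc (0:ℝ) 1)
    (hsol : ∀ a, f a = ((Finset.univ.filter (fun b => R b a)).toList.foldr
        (fun b acc => T (1 - f b) acc) 1))
    (ℓ : A → ℝ)
    (hℓ1 : ∀ a, f a = 1 → ℓ a = 1)
    (hℓ0 : ∀ a, f a ≠ 1 → (∃ b, R b a ∧ f b = 1) → ℓ a = 0)
    (hℓh : ∀ a, f a ≠ 1 → ¬ (∃ b, R b a ∧ f b = 1) → ℓ a = 1/2) :
    ∀ a, (ℓ a = 1 ↔ ∀ b, R b a → ℓ b = 0) ∧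
         (ℓ a = 0 ↔ ∃ b, R b a ∧ ℓ b = 1) := by

  have one_mem : (1:ℝ) ∈ Set.Icc (0:ℝ) 1 := Set.mem_Icc.mpr ⟨zero_le_one, le_rfl⟩
  have hfact : ∀ b, (1 - f b) ∈ Set.Icc (0:ℝ) 1 := fun b =>
    Set.mem_Icc.mpr ⟨by linarith [(hf b).2], by linarith [(hf b).1]⟩
  have hmem : ∀ L : List A, (L.foldr (fun b acc => T (1 - f b) acc) 1) ∈ Set.Icc (0:ℝ) 1 := by
    intro L
    induction L with
    | nil => exact one_mem
    | cons h t ih => exact hT_mem _ (hfact h) _ ih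
  have hle : ∀ L : List A, ∀ b ∈ L, (L.foldr (fun b acc => T (1 - f b) acc) 1) ≤ 1 - f b := by
    intro L
    induction L with
    | nil => intro b hb; simp at hb
    | cons h t ih =>
      intro b hb
      rcases List.mem_cons.mp hb with rfl | hb
      · calc T (1 - f b) (t.foldr (fun b acc => T (1 - f b) acc) 1)
            ≤ T (1 - f b) 1 :=
              hTmono _ (hfact b) _ (hmem t) _ (hfact b) _ one_mem le_rfl (hmem t).2
          _ = 1 - f b := hT1 _ (hfact b)
      · calc T (1 - f h) (t.foldr (fun b acc => T (1 - f b) acc) 1)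
            ≤ T 1 (t.foldr (fun b acc => T (1 - f b) acc) 1) :=
              hTmono _ (hfact h) _ (hmem t) _ one_mem _ (hmem t) (hfact h).2 le_rfl
          _ = t.foldr (fun b acc => T (1 - f b) acc) 1 := by
              rw [hTcomm _ one_mem _ (hmem t)]; exact hT1 _ (hmem t)
          _ ≤ 1 - f b := ih b hb
  have hone : ∀ L : List A, (∀ b ∈ L, f b = 0) →
      (L.foldr (fun b acc => T (1 - f b) acc) 1) = 1 := by
    intro L
    induction L with
    | nil => intro _; rfl
    | cons h t ih =>
      intro hz
      have h0 : f h = 0 := hz h List.mem_cons_self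
      have ht : t.foldr (fun b acc => T (1 - f b) acc) 1 = 1 :=
        ih (fun b hb => hz b (List.mem_cons_of_mem _ hb))
      show T (1 - f h) (t.foldr (fun b acc => T (1 - f b) acc) 1) = 1
      rw [ht, h0]
      simpa using hT1 1 one_mem
  have hpos : ∀ L : List A, (∀ b ∈ L, f b ≠ 1) →
      0 < (L.foldr (fun b acc => T (1 - f b) acc) 1) := by
    intro L
    induction L with
    | nil => intro _; exact one_pos
    | cons h t ih =>
      intro hz
      have hlt : f h < 1 := lt_of_le_of_ne (hf h).2 (hz h List.mem_cons_self)
      exact hTnzd _ _ (by linarith) (hfact h).2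
        (ih (fun b hb => hz b (List.mem_cons_of_mem _ hb))) (hmem t).2
  have hmemL : ∀ a b : A, b ∈ (Finset.univ.filter (fun b => R b a)).toList ↔ R b a := by
    intro a b; simp [Finset.mem_toList]
  have hch1 : ∀ a, f a = 1 ↔ ∀ b, R b a → f b = 0 := by
    intro a
    constructor
    · intro h1 b hb
      have hb' := hle _ b ((hmemL a b).mpr hb)
      rw [← hsol a, h1] at hb'
      have := (hf b).1
      linarith
    · intro h
      rw [hsol a]
      exact hone _ (fun b hb => h b ((hmemL a b).mp hb))
  have hch0 : ∀ a, f a = 0 ↔ ∃ b, R b a ∧ f b = 1 := by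
    intro a
    constructor
    · intro h0
      by_contra hc
      push_neg at hc
      have hp : 0 < (Finset.univ.filter (fun b => R b a)).toList.foldr
          (fun b acc => T (1 - f b) acc) 1 :=
        hpos _ (fun b hb => hc b ((hmemL a b).mp hb))
      rw [← hsol a, h0] at hp
      exact lt_irrefl 0 hp
    · rintro ⟨b, hb, hb1⟩
      have hb' := hle _ b ((hmemL a b).mpr hb)
      rw [← hsol a, hb1] at hb'
      have := (hf a).1
      linarith
  have hinv1 : ∀ a, ℓ a = 1 → f a = 1 := by
    intro a h
    by_contra hne
    by_cases he : ∃ b, R b a ∧ f b = 1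
    · rw [hℓ0 a hne he] at h; norm_num at h
    · rw [hℓh a hne he] at h; norm_num at h
  have hinv0 : ∀ a, ℓ a = 0 → f a ≠ 1 ∧ ∃ b, R b a ∧ f b = 1 := by
    intro a h
    by_cases hne : f a = 1
    · rw [hℓ1 a hne] at h; norm_num at h
    · by_cases he : ∃ b, R b a ∧ f b = 1
      · exact ⟨hne, he⟩
      · rw [hℓh a hne he] at h; norm_num at h
  intro a
  constructor
  · constructor
    · intro h b hb
      have hfa := hinv1 a h
      have hfb : f b = 0 := (hch1 a).mp hfa b hb
      exact hℓ0 b (by rw [hfb]; norm_num) ((hch0 b).mp hfb)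
    · intro h
      apply hℓ1
      rw [hch1]
      intro b hb
      obtain ⟨_, c, hc, hc1⟩ := hinv0 b (h b hb)
      exact (hch0 b).mpr ⟨c, hc, hc1⟩
  · constructor
    · intro h
      obtain ⟨hne, b, hb, hb1⟩ := hinv0 a h
      exact ⟨b, hb, hℓ1 b hb1⟩
    · rintro ⟨b, hb, hb1⟩
      have hfb := hinv1 b hb1
      have hfa0 : f a = 0 := (hch0 a).mpr ⟨b, hb, hfb⟩
      exact hℓ0 a (by rw [hfa0]; norm_num) ⟨b, hb, hfb⟩
end

section
/- Let (A,R) be a finite argumentation framework, N the standard negation, and ⊙ a t-norm with (1/2) ⊙ (1/2) = 1/2. If ℓ : A → {0,1/2,1} is a complete labelling, then ℓ is a solution of the ⊙-encoded equational system: for every a, ℓ(a) = ⊙-product over attackers b of (1 - ℓ(b)) (empty product = 1). -/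
/-- Every complete labelling is a solution of the encoded system for a t-norm ⊙
with (1/2) ⊙ (1/2) = 1/2 and the standard negation. -/
theorem complete_is_half_idempotent_encoded {A : Type*} [Fintype A] [DecidableEq A]
    (R : A → A → Prop) [DecidableRel R]
    (T : ℝ → ℝ → ℝ)
    (hT_mem : ∀ x ∈ Set.Icc (0:ℝ) 1, ∀ y ∈ Set.Icc (0:ℝ) 1, T x y ∈ Set.Icc (0:ℝ) 1)
    (hT1 : ∀ x ∈ Set.Icc (0:ℝ) 1, T x 1 = x)
    (hTcomm : ∀ x ∈ Set.Icc (0:ℝ) 1, ∀ y ∈ Set.Icc (0:ℝ) 1, T x y = T y x)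
    (hTassoc : ∀ x ∈ Set.Icc (0:ℝ) 1, ∀ y ∈ Set.Icc (0:ℝ) 1, ∀ z ∈ Set.Icc (0:ℝ) 1,
      T x (T y z) = T (T x y) z)
    (hTmono : ∀ x ∈ Set.Icc (0:ℝ) 1, ∀ y ∈ Set.Icc (0:ℝ) 1, ∀ u ∈ Set.Icc (0:ℝ) 1,
      ∀ v ∈ Set.Icc (0:ℝ) 1, x ≤ u → y ≤ v → T x y ≤ T u v)
    (hThalf : T (1/2) (1/2) = 1/2)
    (ℓ : A → ℝ) (hrange : ∀ a, ℓ a = 0 ∨ ℓ a = 1/2 ∨ ℓ a = 1)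
    (hcomplete : ∀ a, (ℓ a = 1 ↔ ∀ b, R b a → ℓ b = 0) ∧
                      (ℓ a = 0 ↔ ∃ b, R b a ∧ ℓ b = 1)) :
    ∀ a, ℓ a = ((Finset.univ.filter (fun b => R b a)).toList.foldr
        (fun b acc => T (1 - ℓ b) acc) 1) := by
  classical
  have h0 : (0:ℝ) ∈ Set.Icc (0:ℝ) 1 := by norm_num
  have hh : ((1:ℝ)/2) ∈ Set.Icc (0:ℝ) 1 := by norm_num
  have h1 : (1:ℝ) ∈ Set.Icc (0:ℝ) 1 := by norm_num
  have hTx0 : ∀ x ∈ Set.Icc (0:ℝ) 1, T x 0 = 0 := by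
    intro x hx
    have hle : T x 0 ≤ T 1 0 := hTmono x hx 0 h0 1 h1 0 h0 hx.2 le_rfl
    have h10 : T 1 0 = 0 := by rw [hTcomm 1 h1 0 h0, hT1 0 h0]
    have hge : 0 ≤ T x 0 := (hT_mem x hx 0 h0).1
    linarith [hle, h10 ▸ hle]
  have hTmin : ∀ x y : ℝ, (x = 0 ∨ x = 1/2 ∨ x = 1) → (y = 0 ∨ y = 1/2 ∨ y = 1) →
      T x y = min x y := by
    rintro x y (rfl | rfl | rfl) (rfl | rfl | rfl)
    · rw [hTx0 0 h0]; norm_num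
    · rw [hTcomm 0 h0 (1/2) hh, hTx0 _ hh]; norm_num
    · rw [hT1 0 h0]; norm_num
    · rw [hTx0 _ hh]; norm_num
    · rw [hThalf]; norm_num
    · rw [hT1 _ hh]; norm_num
    · rw [hTx0 1 h1]; norm_num
    · rw [hTcomm 1 h1 _ hh, hT1 _ hh]; norm_num
    · rw [hT1 1 h1]; norm_num
  have key : ∀ L : List A,
      (L.foldr (fun b acc => T (1 - ℓ b) acc) 1 = 0 ∨
       L.foldr (fun b acc => T (1 - ℓ b) acc) 1 = 1/2 ∨
       L.foldr (fun b acc => T (1 - ℓ b) acc) 1 = 1) ∧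
      (L.foldr (fun b acc => T (1 - ℓ b) acc) 1 = 1 ↔ ∀ b ∈ L, ℓ b = 0) ∧
      (L.foldr (fun b acc => T (1 - ℓ b) acc) 1 = 0 ↔ ∃ b ∈ L, ℓ b = 1) := by
    intro L
    induction L with
    | nil =>
      refine ⟨Or.inr (Or.inr rfl), ?_, ?_⟩ <;> simp <;> norm_num
    | cons b L IH =>
      obtain ⟨hrS, hr1, hr0⟩ := IH
      set r := L.foldr (fun b acc => T (1 - ℓ b) acc) 1 with hrdef
      have hxS : (1 - ℓ b = 0 ∨ 1 - ℓ b = 1/2 ∨ 1 - ℓ b = 1) := by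
        rcases hrange b with h | h | h <;> rw [h] <;> norm_num
      have hmin : (b :: L).foldr (fun b acc => T (1 - ℓ b) acc) 1 = min (1 - ℓ b) r := by
        simp only [List.foldr]
        exact hTmin _ _ hxS hrS
      rw [hmin]
      have hx01 : 0 ≤ 1 - ℓ b ∧ 1 - ℓ b ≤ 1 := by
        rcases hxS with h | h | h <;> rw [h] <;> norm_num
      have hr01 : 0 ≤ r ∧ r ≤ 1 := by
        rcases hrS with h | h | h <;> rw [h] <;> norm_num
      refine ⟨?_, ?_, ?_⟩
      · rcases min_choice (1 - ℓ b) r with h | h <;> rw [h]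
        · exact hxS
        · exact hrS
      · constructor
        · intro h
          have hxle : (1:ℝ) ≤ 1 - ℓ b := h.symm.le.trans (min_le_left (1 - ℓ b) r)
          have hrle : (1:ℝ) ≤ r := h.symm.le.trans (min_le_right (1 - ℓ b) r)
          have hx1 : ℓ b = 0 := by linarith [hx01.2]
          have hrr : r = 1 := le_antisymm hr01.2 hrle
          intro c hc
          rcases List.mem_cons.mp hc with rfl | hc
          · exact hx1
          · exact hr1.mp hrr c hc
        · intro h
          have hb0 : ℓ b = 0 := h b (List.mem_cons_self)
          have hrr : r = 1 := hr1.mpr (fun c hc => h c (List.mem_cons_of_mem b hc))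
          rw [hrr, hb0]; norm_num
      · constructor
        · intro h
          rcases min_choice (1 - ℓ b) r with hm | hm
          · refine ⟨b, List.mem_cons_self, ?_⟩
            have : 1 - ℓ b = 0 := by rw [← hm]; exact h
            linarith
          · have : r = 0 := by rw [← hm]; exact h
            obtain ⟨c, hc, hc1⟩ := hr0.mp this
            exact ⟨c, List.mem_cons_of_mem b hc, hc1⟩
        · rintro ⟨c, hc, hc1⟩
          rcases List.mem_cons.mp hc with rfl | hc
          · rw [hc1]
            norm_num
            exact hr01.1
          · have : r = 0 := hr0.mpr ⟨c, hc, hc1⟩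
            rw [this]
            exact min_eq_right hx01.1
  intro a
  obtain ⟨h1iff, h0iff⟩ := hcomplete a
  obtain ⟨rS, r1, r0⟩ := key (Finset.univ.filter (fun b => R b a)).toList
  have hmem : ∀ b, b ∈ (Finset.univ.filter (fun b => R b a)).toList ↔ R b a := by
    intro b; simp [Finset.mem_toList]
  rcases hrange a with ha | ha | ha
  · obtain ⟨b, hb, hb1⟩ := h0iff.mp ha
    rw [ha, r0.mpr ⟨b, (hmem b).mpr hb, hb1⟩]
  · have hne1 : (Finset.univ.filter (fun b => R b a)).toList.foldr
        (fun b acc => T (1 - ℓ b) acc) 1 ≠ 1 := by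
      intro h
      have : ℓ a = 1 := h1iff.mpr (fun b hb => r1.mp h b ((hmem b).mpr hb))
      rw [ha] at this; norm_num at this
    have hne0 : (Finset.univ.filter (fun b => R b a)).toList.foldr
        (fun b acc => T (1 - ℓ b) acc) 1 ≠ 0 := by
      intro h
      obtain ⟨b, hb, hb1⟩ := r0.mp h
      have : ℓ a = 0 := h0iff.mpr ⟨b, (hmem b).mp hb, hb1⟩
      rw [ha] at this; norm_num at this
    rcases rS with h | h | h
    · exact absurd h hne0
    · rw [ha, h]
    · exact absurd h hne1
  · rw [ha, r1.mpr (fun b hb => h1iff.mp ha b ((hmem b).mp hb))]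
end
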